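/- arXiv:2401.00815 — 7 statements merged into one kernel-verified Lean document; each statement's English description precedes it below -/
import Mathlib

section
/- Assume the Itô-generator setting. Suppose the tuple of finite Borel measures (μ₀, μ, μ_c, μ_p) satisfies the Liouville equation, and suppose (γ, v) is dual-feasible. Then the total mass of μ_p satisfies μ_p(ℝ × ℝⁿ) ≤ γ; i.e., weak duality holds between the measure program for the worst-case probability of unsafety and its dual program in continuous functions. -/
open MeasureTheory
open scoped ENNReal

/-- The Itô generator of the SDE `dx = f dt + g dW`:
`ℒv(t,x) = ∂ₜ v + f·∇ₓ v + (1/2) gᵀ (∇²ₓₓ v) g`, expressed via the Fréchet derivative in the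
direction `(1, f p)` and the second derivative in the direction `(0, g p)` twice. -/
noncomputable def itoGen {n : ℕ}
    (f g : ℝ × EuclideanSpace ℝ (Fin n) → EuclideanSpace ℝ (Fin n))
    (v : ℝ × EuclideanSpace ℝ (Fin n) → ℝ)
    (p : ℝ × EuclideanSpace ℝ (Fin n)) : ℝ :=
  fderiv ℝ v p (1, f p) + (1 / 2) * iteratedFDeriv ℝ 2 v p ![(0, g p), (0, g p)]

/-- Weak duality between the measure LP for the worst-case probability of unsafety and its
dual LP in continuous functions: any terminal/unsafe measure mass is at most any dual-feasible
bound `γ`. -/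
theorem weak_duality_unsafe_prob {n : ℕ} (hn : 1 ≤ n)
    {X X₀ Xu : Set (EuclideanSpace ℝ (Fin n))}
    (hX : IsCompact X) (hX₀ : IsCompact X₀) (hXu : IsCompact Xu)
    (hX₀X : X₀ ⊆ X) (hXuX : Xu ⊆ X)
    {t₀ T : ℝ} (ht₀ : 0 ≤ t₀) (ht₀T : t₀ < T)
    {f g : ℝ × EuclideanSpace ℝ (Fin n) → EuclideanSpace ℝ (Fin n)}
    (hf : Continuous f) (hg : Continuous g)
    (μ₀ : Measure (EuclideanSpace ℝ (Fin n))) [IsProbabilityMeasure μ₀] (hμ₀ : μ₀ X₀ᶜ = 0)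
    (μ μc μp : Measure (ℝ × EuclideanSpace ℝ (Fin n)))
    [IsFiniteMeasure μ] [IsFiniteMeasure μc] [IsFiniteMeasure μp]
    (hμ : μ (Set.Icc t₀ T ×ˢ X)ᶜ = 0) (hμc : μc (Set.Icc t₀ T ×ˢ X)ᶜ = 0)
    (hμp : μp (Set.Icc t₀ T ×ˢ Xu)ᶜ = 0)
    (hLiou : ∀ w : ℝ × EuclideanSpace ℝ (Fin n) → ℝ, ContDiff ℝ 2 w →
      ∫ q, w q ∂(μp + μc) = (∫ x, w (t₀, x) ∂μ₀) + ∫ q, itoGen f g w q ∂μ)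
    (γ : ℝ) (v : ℝ × EuclideanSpace ℝ (Fin n) → ℝ) (hv : ContDiff ℝ 2 v)
    (hγ : ∀ x ∈ X₀, v (t₀, x) ≤ γ)
    (hLie : ∀ q ∈ Set.Icc t₀ T ×ˢ X, itoGen f g v q ≤ 0)
    (hv0 : ∀ q ∈ Set.Icc t₀ T ×ˢ X, 0 ≤ v q)
    (hv1 : ∀ q ∈ Set.Icc t₀ T ×ˢ Xu, 1 ≤ v q) :
    (μp Set.univ).toReal ≤ γ := by
  -- the supports
  set S : Set (ℝ × EuclideanSpace ℝ (Fin n)) := Set.Icc t₀ T ×ˢ X with hS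
  set Su : Set (ℝ × EuclideanSpace ℝ (Fin n)) := Set.Icc t₀ T ×ˢ Xu with hSu
  have hScomp : IsCompact S := isCompact_Icc.prod hX
  have hSucomp : IsCompact Su := isCompact_Icc.prod hXu
  have hvc : Continuous v := hv.continuous
  have haep : ∀ᵐ q ∂μp, q ∈ Su := by
    rw [MeasureTheory.ae_iff]; exact hμp
  have haec : ∀ᵐ q ∂μc, q ∈ S := by
    rw [MeasureTheory.ae_iff]; exact hμc
  have haeμ : ∀ᵐ q ∂μ, q ∈ S := by
    rw [MeasureTheory.ae_iff]; exact hμ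
  have hae₀ : ∀ᵐ x ∂μ₀, x ∈ X₀ := by
    rw [MeasureTheory.ae_iff]; exact hμ₀
  have hrp : μp.restrict Su = μp := Measure.restrict_eq_self_of_ae_mem haep
  have hrc : μc.restrict S = μc := Measure.restrict_eq_self_of_ae_mem haec
  have hr₀ : μ₀.restrict X₀ = μ₀ := Measure.restrict_eq_self_of_ae_mem hae₀
  have hintp : Integrable v μp := by
    rw [← hrp]
    exact (hvc.continuousOn.integrableOn_compact hSucomp)
  have hintc : Integrable v μc := by
    rw [← hrc]
    exact (hvc.continuousOn.integrableOn_compact hScomp)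
  have hint₀ : Integrable (fun x => v (t₀, x)) μ₀ := by
    rw [← hr₀]
    exact ((hvc.comp (continuous_const.prodMk continuous_id)).continuousOn.integrableOn_compact hX₀)
  have h1 : (μp Set.univ).toReal ≤ ∫ q, v q ∂μp := by
    have : (μp Set.univ).toReal = ∫ _, (1 : ℝ) ∂μp := by simp; rfl
    rw [this]
    refine integral_mono_ae (integrable_const 1) hintp ?_
    filter_upwards [haep] with q hq using hv1 q hq
  have h2 : (0 : ℝ) ≤ ∫ q, v q ∂μc := by
    refine integral_nonneg_of_ae ?_
    filter_upwards [haec] with q hq using hv0 q hq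
  have h3 : ∫ q, itoGen f g v q ∂μ ≤ 0 := by
    refine integral_nonpos_of_ae ?_
    filter_upwards [haeμ] with q hq using hLie q hq
  have h4 : ∫ x, v (t₀, x) ∂μ₀ ≤ γ := by
    have : ∫ x, v (t₀, x) ∂μ₀ ≤ ∫ _, γ ∂μ₀ := by
      refine integral_mono_ae hint₀ (integrable_const γ) ?_
      filter_upwards [hae₀] with x hx using hγ x hx
    simpa using this
  have hsplit : ∫ q, v q ∂(μp + μc) = ∫ q, v q ∂μp + ∫ q, v q ∂μc :=
    integral_add_measure hintp hintc
  have heq := hLiou v hv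
  rw [hsplit] at heq
  linarith
end

section
/- Assume the Itô-generator setting. Let μ₀ be a probability Borel measure supported in X₀ and let μ and μ_τ be finite Borel measures supported in [t₀,T] × X such that for every twice continuously differentiable v : ℝ × ℝⁿ → ℝ one has ∫ v dμ_τ = ∫ v(t₀,x) dμ₀(x) + ∫ ℒv dμ. If (γ, v) is dual-feasible, then μ_τ([t₀,T] × X_u) ≤ γ; i.e., any dual-feasible pair upper-bounds the terminal mass placed on the unsafe set. -/
open MeasureTheory
open scoped ENNReal

lemma integrable_of_null_compl {α : Type*} [MeasurableSpace α] [TopologicalSpace α]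
    [OpensMeasurableSpace α] {μ : Measure α} [IsFiniteMeasure μ] {K : Set α}
    (hK : IsCompact K) (hμK : μ Kᶜ = 0) {h : α → ℝ} (hh : Continuous h) :
    Integrable h μ := by
  obtain ⟨C, hC⟩ := hK.exists_bound_of_continuousOn hh.continuousOn
  have hae : ∀ᵐ q ∂μ, q ∈ K := by
    rw [ae_iff]; exact hμK
  refine ⟨hh.aestronglyMeasurable, ?_⟩
  apply HasFiniteIntegral.of_bounded (C := C)
  filter_upwards [hae] with q hq
  exact hC q hq

lemma itoGen_continuous {n : ℕ}
    {f g : ℝ × EuclideanSpace ℝ (Fin n) → EuclideanSpace ℝ (Fin n)}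
    (hf : Continuous f) (hg : Continuous g)
    {v : ℝ × EuclideanSpace ℝ (Fin n) → ℝ} (hv : ContDiff ℝ 2 v) :
    Continuous (itoGen f g v) := by
  have h1 : Continuous fun p => fderiv ℝ v p (1, f p) :=
    (hv.continuous_fderiv (by norm_num)).clm_apply (continuous_const.prodMk hf)
  have h2' : Continuous (iteratedFDeriv ℝ 2 v) := hv.continuous_iteratedFDeriv le_rfl
  have harg : Continuous fun p => (![(0, g p), (0, g p)] :
      Fin 2 → ℝ × EuclideanSpace ℝ (Fin n)) := by
    refine continuous_pi fun i => ?_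
    fin_cases i <;> simpa using continuous_const.prodMk hg
  have h2 : Continuous fun p => iteratedFDeriv ℝ 2 v p ![(0, g p), (0, g p)] :=
    ContinuousEval.continuous_eval.comp (h2'.prodMk harg)
  exact h1.add (continuous_const.mul h2)

/-- Any dual-feasible pair `(γ, v)` upper-bounds the terminal mass placed on the unsafe set
by any measure triple `(μ₀, μ, μ_τ)` satisfying the martingale (Liouville/Dynkin) relation. -/
theorem dual_feasible_bounds_terminal_unsafe_mass {n : ℕ} (hn : 1 ≤ n)
    {X X₀ Xu : Set (EuclideanSpace ℝ (Fin n))}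
    (hX : IsCompact X) (hX₀ : IsCompact X₀) (hXu : IsCompact Xu)
    (hX₀X : X₀ ⊆ X) (hXuX : Xu ⊆ X)
    {t₀ T : ℝ} (ht₀ : 0 ≤ t₀) (ht₀T : t₀ < T)
    {f g : ℝ × EuclideanSpace ℝ (Fin n) → EuclideanSpace ℝ (Fin n)}
    (hf : Continuous f) (hg : Continuous g)
    (μ₀ : Measure (EuclideanSpace ℝ (Fin n))) [IsProbabilityMeasure μ₀] (hμ₀ : μ₀ X₀ᶜ = 0)
    (μ μτ : Measure (ℝ × EuclideanSpace ℝ (Fin n)))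
    [IsFiniteMeasure μ] [IsFiniteMeasure μτ]
    (hμ : μ (Set.Icc t₀ T ×ˢ X)ᶜ = 0) (hμτ : μτ (Set.Icc t₀ T ×ˢ X)ᶜ = 0)
    (hLiou : ∀ w : ℝ × EuclideanSpace ℝ (Fin n) → ℝ, ContDiff ℝ 2 w →
      ∫ q, w q ∂μτ = (∫ x, w (t₀, x) ∂μ₀) + ∫ q, itoGen f g w q ∂μ)
    (γ : ℝ) (v : ℝ × EuclideanSpace ℝ (Fin n) → ℝ) (hv : ContDiff ℝ 2 v)
    (hγ : ∀ x ∈ X₀, v (t₀, x) ≤ γ)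
    (hLie : ∀ q ∈ Set.Icc t₀ T ×ˢ X, itoGen f g v q ≤ 0)
    (hv0 : ∀ q ∈ Set.Icc t₀ T ×ˢ X, 0 ≤ v q)
    (hv1 : ∀ q ∈ Set.Icc t₀ T ×ˢ Xu, 1 ≤ v q) :
    (μτ (Set.Icc t₀ T ×ˢ Xu)).toReal ≤ γ := by
  set K : Set (ℝ × EuclideanSpace ℝ (Fin n)) := Set.Icc t₀ T ×ˢ X with hK
  set S : Set (ℝ × EuclideanSpace ℝ (Fin n)) := Set.Icc t₀ T ×ˢ Xu with hS
  have hKc : IsCompact K := isCompact_Icc.prod hX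
  have hSmeas : MeasurableSet S := measurableSet_Icc.prod hXu.measurableSet
  have hvc : Continuous v := hv.continuous
  -- a.e. membership facts
  have haeτ : ∀ᵐ q ∂μτ, q ∈ K := by rw [ae_iff]; exact hμτ
  have haeμ : ∀ᵐ q ∂μ, q ∈ K := by rw [ae_iff]; exact hμ
  have hae₀ : ∀ᵐ x ∂μ₀, x ∈ X₀ := by rw [ae_iff]; exact hμ₀
  -- integrability
  have hint_v : Integrable v μτ := integrable_of_null_compl hKc hμτ hvc
  have hint_L : Integrable (itoGen f g v) μ :=
    integrable_of_null_compl hKc hμ (itoGen_continuous hf hg hv)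
  have hint_v0 : Integrable (fun x => v (t₀, x)) μ₀ :=
    integrable_of_null_compl hX₀ hμ₀ (hvc.comp (continuous_const.prodMk continuous_id))
  -- step 1 : (μτ S).toReal ≤ ∫ v dμτ
  have step1 : (μτ S).toReal ≤ ∫ q, v q ∂μτ := by
    have : (μτ S).toReal = ∫ q, S.indicator (fun _ => (1 : ℝ)) q ∂μτ := by
      exact (integral_indicator_one hSmeas).symm
    rw [this]
    refine integral_mono_ae ((integrable_const (1 : ℝ)).indicator hSmeas) hint_v ?_
    filter_upwards [haeτ] with q hq
    by_cases hqS : q ∈ S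
    · rw [Set.indicator_of_mem hqS]; exact hv1 q hqS
    · rw [Set.indicator_of_notMem hqS]; exact hv0 q hq
  -- step 2 : ∫ v dμτ ≤ γ
  have hμ₀γ : ∫ x, v (t₀, x) ∂μ₀ ≤ γ := by
    calc ∫ x, v (t₀, x) ∂μ₀ ≤ ∫ _x, γ ∂μ₀ := by
          refine integral_mono_ae hint_v0 (integrable_const γ) ?_
          filter_upwards [hae₀] with x hx
          exact hγ x hx
      _ = γ := by simp
  have hμL : ∫ q, itoGen f g v q ∂μ ≤ 0 := by
    apply integral_nonpos_of_ae
    filter_upwards [haeμ] with q hq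
    exact hLie q hq
  have step2 : ∫ q, v q ∂μτ ≤ γ := by
    rw [hLiou v hv]
    linarith
  exact step1.trans step2
end

section
/- Assume the Itô-generator setting, and let μ₀ be a fixed probability Borel measure supported in X. Let μ and μ_c be finite Borel measures supported in [t₀,T] × X and μ_p a finite Borel measure supported in [t₀,T] × X_u such that for every twice continuously differentiable v : ℝ × ℝⁿ → ℝ one has ∫ v d(μ_p + μ_c) = ∫ v(t₀,x) dμ₀(x) + ∫ ℒv dμ. Let v : ℝ × ℝⁿ → ℝ be twice continuously differentiable with (ℒv)(t,x) ≤ 0 for all (t,x) ∈ [t₀,T] × X, v(t,x) ≥ 0 for all (t,x) ∈ [t₀,T] × X, and v(t,x) ≥ 1 for all (t,x) ∈ [t₀,T] × X_u. Then the total mass of μ_p satisfies μ_p(ℝ × ℝⁿ) ≤ ∫_X v(t₀,x) dμ₀(x); i.e., weak duality holds between the μ₀-averaged unsafe-probability measure program and the risk-contour program in continuous functions. -/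
open MeasureTheory
open scoped ENNReal

/-- Weak duality between the `μ₀`-averaged unsafe-probability measure program and the
risk-contour program in continuous functions: the mass of the unsafe component `μ_p` is
bounded by `∫_X v(t₀,·) dμ₀` for any feasible risk function `v`. -/
theorem weak_duality_risk_contour {n : ℕ} (hn : 1 ≤ n)
    {X Xu : Set (EuclideanSpace ℝ (Fin n))}
    (hX : IsCompact X) (hXu : IsCompact Xu) (hXuX : Xu ⊆ X)
    {t₀ T : ℝ} (ht₀ : 0 ≤ t₀) (ht₀T : t₀ < T)
    {f g : ℝ × EuclideanSpace ℝ (Fin n) → EuclideanSpace ℝ (Fin n)}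
    (hf : Continuous f) (hg : Continuous g)
    (μ₀ : Measure (EuclideanSpace ℝ (Fin n))) [IsProbabilityMeasure μ₀] (hμ₀ : μ₀ Xᶜ = 0)
    (μ μc μp : Measure (ℝ × EuclideanSpace ℝ (Fin n)))
    [IsFiniteMeasure μ] [IsFiniteMeasure μc] [IsFiniteMeasure μp]
    (hμ : μ (Set.Icc t₀ T ×ˢ X)ᶜ = 0) (hμc : μc (Set.Icc t₀ T ×ˢ X)ᶜ = 0)
    (hμp : μp (Set.Icc t₀ T ×ˢ Xu)ᶜ = 0)
    (hLiou : ∀ w : ℝ × EuclideanSpace ℝ (Fin n) → ℝ, ContDiff ℝ 2 w →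
      ∫ q, w q ∂(μp + μc) = (∫ x, w (t₀, x) ∂μ₀) + ∫ q, itoGen f g w q ∂μ)
    (v : ℝ × EuclideanSpace ℝ (Fin n) → ℝ) (hv : ContDiff ℝ 2 v)
    (hLie : ∀ q ∈ Set.Icc t₀ T ×ˢ X, itoGen f g v q ≤ 0)
    (hv0 : ∀ q ∈ Set.Icc t₀ T ×ˢ X, 0 ≤ v q)
    (hv1 : ∀ q ∈ Set.Icc t₀ T ×ˢ Xu, 1 ≤ v q) :
    (μp Set.univ).toReal ≤ ∫ x in X, v (t₀, x) ∂μ₀ := by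
  have hvcont : Continuous v := hv.continuous
  have hSX : MeasurableSet (Set.Icc t₀ T ×ˢ X) :=
    (measurableSet_Icc.prod hX.isClosed.measurableSet)
  have hSXu : MeasurableSet (Set.Icc t₀ T ×ˢ Xu) :=
    (measurableSet_Icc.prod hXu.isClosed.measurableSet)
  have haeX : ∀ᵐ q ∂μ, q ∈ Set.Icc t₀ T ×ˢ X := by
    rw [MeasureTheory.ae_iff]
    exact hμ
  have haeXc : ∀ᵐ q ∂μc, q ∈ Set.Icc t₀ T ×ˢ X := by
    rw [MeasureTheory.ae_iff]
    exact hμc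
  have haeXu : ∀ᵐ q ∂μp, q ∈ Set.Icc t₀ T ×ˢ Xu := by
    rw [MeasureTheory.ae_iff]
    exact hμp
  -- integrability of v
  have hcomp : IsCompact (Set.Icc t₀ T ×ˢ X) := (isCompact_Icc).prod hX
  have hintp : Integrable v μp := by
    rw [← Measure.restrict_eq_self_of_ae_mem haeXu]
    exact hvcont.continuousOn.integrableOn_compact ((isCompact_Icc).prod hXu)
  have hintc : Integrable v μc := by
    rw [← Measure.restrict_eq_self_of_ae_mem haeXc]
    exact hvcont.continuousOn.integrableOn_compact hcomp
  have hL := hLiou v hv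
  rw [integral_add_measure hintp hintc] at hL
  have h1 : (μp Set.univ).toReal ≤ ∫ q, v q ∂μp := by
    have : ∫ q, (1 : ℝ) ∂μp ≤ ∫ q, v q ∂μp := by
      refine integral_mono_ae (integrable_const 1) hintp ?_
      filter_upwards [haeXu] with q hq using hv1 q hq
    simpa [Measure.real] using this
  have h2 : 0 ≤ ∫ q, v q ∂μc := by
    refine integral_nonneg_of_ae ?_
    filter_upwards [haeXc] with q hq using hv0 q hq
  have h3 : ∫ q, itoGen f g v q ∂μ ≤ 0 := by
    refine integral_nonpos_of_ae ?_
    filter_upwards [haeX] with q hq using hLie q hq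
  have h4 : ∫ x, v (t₀, x) ∂μ₀ = ∫ x in X, v (t₀, x) ∂μ₀ := by
    rw [Measure.restrict_eq_self_of_ae_mem (by rw [MeasureTheory.ae_iff]; exact hμ₀)]
  linarith
end

section
/- Let d ≥ 1 and let X ⊆ ℝ^d be compact with compact subsets X₀ ⊆ X and X_u ⊆ X; let t₀ < T be natural numbers. Let (Λ, ℬ) be a measurable space, ξ a probability measure on Λ, and f : ℕ × ℝ^d × Λ → ℝ^d measurable. For bounded measurable v : ℕ × ℝ^d → ℝ define the discrete-time generator (ℒv)(t,x) = ∫_Λ v(t+1, f(t,x,a)) dξ(a) − v(t,x). Let μ₀ be a probability Borel measure supported in X₀, let μ and μ_c be finite measures on ℕ × ℝ^d supported in {t₀,…,T} × X, and let μ_p be a finite measure supported in {t₀,…,T} × X_u, such that for every bounded measurable v one has ∫ v d(μ_p + μ_c) = ∫ v(t₀,x) dμ₀(x) + ∫ ℒv dμ. If γ ∈ ℝ and a bounded measurable v : ℕ × ℝ^d → ℝ satisfy γ ≥ v(t₀,x) for all x ∈ X₀, (ℒv)(t,x) ≤ 0 for all (t,x) ∈ {t₀,…,T} × X, v(t,x)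 ≥ 0 for all (t,x) ∈ {t₀,…,T} × X, and v(t,x) ≥ 1 for all (t,x) ∈ {t₀,…,T} × X_u, then the total mass of μ_p satisfies μ_p(ℕ × ℝ^d) ≤ γ. -/
open MeasureTheory
open scoped ENNReal


private lemma intg_of_bdd {α : Type*} [MeasurableSpace α] (ν : MeasureTheory.Measure α)
    [MeasureTheory.IsFiniteMeasure ν] {g : α → ℝ} (hg : Measurable g)
    (hb : ∃ C, ∀ q, |g q| ≤ C) : MeasureTheory.Integrable g ν := by
  obtain ⟨C, hC⟩ := hb
  exact ⟨hg.aestronglyMeasurable,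
    MeasureTheory.HasFiniteIntegral.of_bounded (MeasureTheory.ae_of_all _ hC)⟩

/-- Weak duality for the discrete-time unsafe-probability linear program: for the
discrete-time generator `(ℒv)(t,x) = ∫_Λ v(t+1, f(t,x,a)) dξ(a) − v(t,x)`, any occupation
measure tuple satisfying the martingale (Liouville/Dynkin) relation has its unsafe-component
mass bounded by any dual-feasible bound `γ`. -/
theorem weak_duality_discrete_unsafe_prob {d : ℕ} (hd : 1 ≤ d)
    {X X₀ Xu : Set (EuclideanSpace ℝ (Fin d))}
    (hX : IsCompact X) (hX₀ : IsCompact X₀) (hXu : IsCompact Xu)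
    (hX₀X : X₀ ⊆ X) (hXuX : Xu ⊆ X)
    {t₀ T : ℕ} (ht₀T : t₀ < T)
    {Λ : Type*} [MeasurableSpace Λ] (ξ : Measure Λ) [IsProbabilityMeasure ξ]
    (f : ℕ × EuclideanSpace ℝ (Fin d) × Λ → EuclideanSpace ℝ (Fin d)) (hf : Measurable f)
    (μ₀ : Measure (EuclideanSpace ℝ (Fin d))) [IsProbabilityMeasure μ₀] (hμ₀ : μ₀ X₀ᶜ = 0)
    (μ μc μp : Measure (ℕ × EuclideanSpace ℝ (Fin d)))
    [IsFiniteMeasure μ] [IsFiniteMeasure μc] [IsFiniteMeasure μp]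
    (hμ : μ (Set.Icc t₀ T ×ˢ X)ᶜ = 0) (hμc : μc (Set.Icc t₀ T ×ˢ X)ᶜ = 0)
    (hμp : μp (Set.Icc t₀ T ×ˢ Xu)ᶜ = 0)
    (hLiou : ∀ w : ℕ × EuclideanSpace ℝ (Fin d) → ℝ, Measurable w → (∃ C, ∀ q, |w q| ≤ C) →
      ∫ q, w q ∂(μp + μc) = (∫ x, w (t₀, x) ∂μ₀) +
        ∫ q, ((∫ a, w (q.1 + 1, f (q.1, q.2, a)) ∂ξ) - w q) ∂μ)
    (γ : ℝ) (v : ℕ × EuclideanSpace ℝ (Fin d) → ℝ)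
    (hvmeas : Measurable v) (hvbdd : ∃ C, ∀ q, |v q| ≤ C)
    (hγ : ∀ x ∈ X₀, v (t₀, x) ≤ γ)
    (hLie : ∀ q ∈ Set.Icc t₀ T ×ˢ X, (∫ a, v (q.1 + 1, f (q.1, q.2, a)) ∂ξ) - v q ≤ 0)
    (hv0 : ∀ q ∈ Set.Icc t₀ T ×ˢ X, 0 ≤ v q)
    (hv1 : ∀ q ∈ Set.Icc t₀ T ×ˢ Xu, 1 ≤ v q) :
    (μp Set.univ).toReal ≤ γ := by
  have h := hLiou v hvmeas hvbdd
  have hip : Integrable v μp := intg_of_bdd μp hvmeas hvbdd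
  have hic : Integrable v μc := intg_of_bdd μc hvmeas hvbdd
  have haep : ∀ᵐ q ∂μp, q ∈ Set.Icc t₀ T ×ˢ Xu := by
    rw [MeasureTheory.ae_iff]; exact hμp
  have haec : ∀ᵐ q ∂μc, q ∈ Set.Icc t₀ T ×ˢ X := by
    rw [MeasureTheory.ae_iff]; exact hμc
  have haeμ : ∀ᵐ q ∂μ, q ∈ Set.Icc t₀ T ×ˢ X := by
    rw [MeasureTheory.ae_iff]; exact hμ
  have hae0 : ∀ᵐ x ∂μ₀, x ∈ X₀ := by
    rw [MeasureTheory.ae_iff]; exact hμ₀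
  have hsplit : ∫ q, v q ∂(μp + μc) = (∫ q, v q ∂μp) + ∫ q, v q ∂μc :=
    integral_add_measure hip hic
  have h1 : (μp Set.univ).toReal ≤ ∫ q, v q ∂μp := by
    have := integral_mono_ae (integrable_const (1:ℝ)) hip
      (haep.mono fun q hq => hv1 q hq)
    simpa [integral_const, smul_eq_mul, measureReal_def] using this
  have h2 : (0:ℝ) ≤ ∫ q, v q ∂μc :=
    integral_nonneg_of_ae (haec.mono fun q hq => hv0 q hq)
  have h3 : (∫ x, v (t₀, x) ∂μ₀) ≤ γ := by
    have := integral_mono_ae (intg_of_bdd μ₀ (hvmeas.comp (measurable_prodMk_left)) 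
      (by obtain ⟨C, hC⟩ := hvbdd; exact ⟨C, fun x => hC _⟩)) (integrable_const γ)
      (hae0.mono fun x hx => hγ x hx)
    simpa [integral_const, smul_eq_mul] using this
  have h4 : (∫ q, ((∫ a, v (q.1 + 1, f (q.1, q.2, a)) ∂ξ) - v q) ∂μ) ≤ 0 :=
    integral_nonpos_of_ae (haeμ.mono fun q hq => hLie q hq)
  rw [hsplit] at h
  linarith
end

section
/- Assume the Itô-generator setting. Suppose the tuple of finite Borel measures (μ₀, μ, μ_c, μ_p) satisfies the Liouville equation. Then: (i) the total mass of μ_p + μ_c equals 1 (in particular μ_p has total mass at most 1), and (ii) the total mass of μ satisfies μ(ℝ × ℝⁿ) ≤ T − t₀. Hence all feasible measure tuples of the unsafe-probability linear program are bounded. -/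
open MeasureTheory
open scoped ENNReal

/-- The second iterated derivative of `Prod.fst` vanishes. -/
lemma iteratedFDeriv_two_fst {n : ℕ} (p : ℝ × EuclideanSpace ℝ (Fin n))
    (m : Fin 2 → ℝ × EuclideanSpace ℝ (Fin n)) :
    iteratedFDeriv ℝ 2 (fun q : ℝ × EuclideanSpace ℝ (Fin n) => q.1) p m = 0 := by
  have hconst : iteratedFDeriv ℝ 1 (fun q : ℝ × EuclideanSpace ℝ (Fin n) => q.1) =
      fun _ => iteratedFDeriv ℝ 1 (fun q : ℝ × EuclideanSpace ℝ (Fin n) => q.1) p := by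
    funext y
    ext m'
    rw [iteratedFDeriv_one_apply, iteratedFDeriv_one_apply]
    have h1 : fderiv ℝ (fun q : ℝ × EuclideanSpace ℝ (Fin n) => q.1) y =
        ContinuousLinearMap.fst ℝ ℝ (EuclideanSpace ℝ (Fin n)) := fderiv_fst
    have h2 : fderiv ℝ (fun q : ℝ × EuclideanSpace ℝ (Fin n) => q.1) p =
        ContinuousLinearMap.fst ℝ ℝ (EuclideanSpace ℝ (Fin n)) := fderiv_fst
    rw [h1, h2]
  have key : (iteratedFDeriv ℝ 2 (fun q : ℝ × EuclideanSpace ℝ (Fin n) => q.1) p) m =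
      (fderiv ℝ (iteratedFDeriv ℝ 1 (fun q : ℝ × EuclideanSpace ℝ (Fin n) => q.1)) p)
        (m 0) (Fin.tail m) :=
    iteratedFDeriv_succ_apply_left m
  rw [key, hconst, fderiv_fun_const]
  simp

/-- All feasible measure tuples of the unsafe-probability LP are bounded: the Liouville
equation forces `μ_p + μ_c` to have total mass `1` (so `μ_p` has mass at most `1`) and the
occupation measure `μ` to have total mass at most `T − t₀`. -/
theorem feasible_measures_bounded {n : ℕ} (hn : 1 ≤ n)
    {X X₀ Xu : Set (EuclideanSpace ℝ (Fin n))}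
    (hX : IsCompact X) (hX₀ : IsCompact X₀) (hXu : IsCompact Xu)
    (hX₀X : X₀ ⊆ X) (hXuX : Xu ⊆ X)
    {t₀ T : ℝ} (ht₀ : 0 ≤ t₀) (ht₀T : t₀ < T)
    {f g : ℝ × EuclideanSpace ℝ (Fin n) → EuclideanSpace ℝ (Fin n)}
    (hf : Continuous f) (hg : Continuous g)
    (μ₀ : Measure (EuclideanSpace ℝ (Fin n))) [IsProbabilityMeasure μ₀] (hμ₀ : μ₀ X₀ᶜ = 0)
    (μ μc μp : Measure (ℝ × EuclideanSpace ℝ (Fin n)))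
    [IsFiniteMeasure μ] [IsFiniteMeasure μc] [IsFiniteMeasure μp]
    (hμ : μ (Set.Icc t₀ T ×ˢ X)ᶜ = 0) (hμc : μc (Set.Icc t₀ T ×ˢ X)ᶜ = 0)
    (hμp : μp (Set.Icc t₀ T ×ˢ Xu)ᶜ = 0)
    (hLiou : ∀ w : ℝ × EuclideanSpace ℝ (Fin n) → ℝ, ContDiff ℝ 2 w →
      ∫ q, w q ∂(μp + μc) = (∫ x, w (t₀, x) ∂μ₀) + ∫ q, itoGen f g w q ∂μ) :
    (μp + μc) Set.univ = 1 ∧ μp Set.univ ≤ 1 ∧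
      μ Set.univ ≤ ENNReal.ofReal (T - t₀) := by
  -- Step 1: apply Liouville to the constant function 1.
  have hgen1 : ∀ q, itoGen f g (fun _ => (1 : ℝ)) q = 0 := by
    intro q
    unfold itoGen
    rw [fderiv_fun_const, iteratedFDeriv_const_of_ne (by norm_num)]
    simp
  have h1 := hLiou (fun _ => (1 : ℝ)) contDiff_const
  simp only [hgen1, integral_const, integral_zero, smul_eq_mul, mul_one,
    measure_univ, ENNReal.toReal_one, mul_zero, add_zero, measureReal_def] at h1
  have hmass : (μp + μc) Set.univ = 1 := by
    rw [← ENNReal.toReal_eq_one_iff]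
    exact h1
  refine ⟨hmass, ?_, ?_⟩
  · calc μp Set.univ ≤ μp Set.univ + μc Set.univ := le_self_add
      _ = (μp + μc) Set.univ := (Measure.add_apply μp μc _).symm
      _ = 1 := hmass
  -- Step 2: apply Liouville to the function (t, x) ↦ t.
  · have hgent : ∀ q, itoGen f g (fun q : ℝ × EuclideanSpace ℝ (Fin n) => q.1) q = 1 := by
      intro q
      unfold itoGen
      rw [iteratedFDeriv_two_fst, (fderiv_fst :
        fderiv ℝ (fun q : ℝ × EuclideanSpace ℝ (Fin n) => q.1) q = _)]
      simp
    have h2 := hLiou (fun q => q.1) contDiff_fst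
    simp only [hgent, integral_const, smul_eq_mul, mul_one, measure_univ,
      ENNReal.toReal_one, one_mul, measureReal_def] at h2
    -- a.e. support of μp + μc
    have hsupp : (μp + μc) (Set.Icc t₀ T ×ˢ X)ᶜ = 0 := by
      rw [Measure.add_apply, hμc, add_zero]
      refine measure_mono_null ?_ hμp
      exact Set.compl_subset_compl.mpr (Set.prod_mono le_rfl hXuX)
    have hae : ∀ᵐ q ∂(μp + μc), q ∈ Set.Icc t₀ T ×ˢ X := by
      rw [ae_iff]
      exact measure_mono_null (fun q hq => hq) hsupp
    have hint : Integrable (fun q : ℝ × EuclideanSpace ℝ (Fin n) => q.1) (μp + μc) := by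
      refine Integrable.mono' (integrable_const (max |t₀| |T|))
        continuous_fst.aestronglyMeasurable ?_
      filter_upwards [hae] with q hq
      rw [Real.norm_eq_abs]
      exact abs_le_max_abs_abs hq.1.1 hq.1.2
    have hle : ∫ q, q.1 ∂(μp + μc) ≤ T := by
      have := integral_mono_ae hint (integrable_const T)
        (by filter_upwards [hae] with q hq; exact hq.1.2)
      simpa [integral_const, hmass, measureReal_def] using this
    rw [h2] at hle
    rw [ENNReal.le_ofReal_iff_toReal_le (measure_ne_top μ _) (by linarith)]
    linarith
end

section
/- Let (Ω, 𝒜, μ) be a probability space with filtration (ℱ_n)_{n∈ℕ}, let d ≥ 1, let Y : ℕ → Ω → ℝ^d be a sequence of random variables with each Y_n ℱ_n-measurable, and let X_u ⊆ ℝ^d be a Borel set. Let v : ℕ → ℝ^d → ℝ be a sequence of Borel functions such that v_n(x) ≥ 0 for all n ∈ ℕ and x ∈ ℝ^d, v_n(x) ≥ 1 for all n ∈ ℕ and x ∈ X_u, and the process n ↦ (ω ↦ v_n(Y_n(ω))) is a supermartingale with respect to (ℱ_n) and μ. Then for every N ∈ ℕ: μ{ ω : ∃ n ≤ N, Y_n(ω)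 ∈ X_u } ≤ ∫_Ω v_0(Y_0(ω)) dμ(ω). In other words, any nonnegative supermartingale certificate exceeding 1 on the unsafe set upper-bounds the probability of reaching the unsafe set. -/
open MeasureTheory
open scoped ENNReal

/-- A nonnegative supermartingale certificate `v` exceeding `1` on the unsafe set `X_u`
upper-bounds the probability that the process `Y` reaches `X_u` within the horizon `N`. -/
theorem supermartingale_certificate_bounds_unsafe_prob
    {Ω : Type*} [m : MeasurableSpace Ω] {μ : Measure Ω} [IsProbabilityMeasure μ]
    (ℱ : Filtration ℕ m) {d : ℕ} (hd : 1 ≤ d)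
    (Y : ℕ → Ω → EuclideanSpace ℝ (Fin d)) (hY : ∀ n, Measurable[ℱ n] (Y n))
    {Xu : Set (EuclideanSpace ℝ (Fin d))} (hXu : MeasurableSet Xu)
    (v : ℕ → EuclideanSpace ℝ (Fin d) → ℝ) (hvmeas : ∀ n, Measurable (v n))
    (hv0 : ∀ n x, 0 ≤ v n x) (hv1 : ∀ n, ∀ x ∈ Xu, 1 ≤ v n x)
    (hsup : Supermartingale (fun n ω => v n (Y n ω)) ℱ μ) (N : ℕ) :
    (μ {ω | ∃ n ≤ N, Y n ω ∈ Xu}).toReal ≤ ∫ ω, v 0 (Y 0 ω) ∂μ := by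
  set f : ℕ → Ω → ℝ := fun n ω => v n (Y n ω) with hf
  set τ : Ω → WithTop ℕ := fun ω => (hittingBtwn f (Set.Ici (1 : ℝ)) 0 N ω : ℕ) with hτdef
  have hτ : IsStoppingTime ℱ τ :=
    Adapted.isStoppingTime_hittingBtwn hsup.stronglyAdapted.adapted measurableSet_Ici
  have hτle : ∀ ω, τ ω ≤ N := fun ω => WithTop.coe_le_coe.mpr (hittingBtwn_le ω)
  -- the test set
  set B : Set Ω := {ω | 1 ≤ stoppedValue f τ ω} with hB
  have hneg : ∀ σ : Ω → WithTop ℕ, stoppedValue (-f) σ = -(stoppedValue f σ) := fun σ => rfl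
  have hsm : StronglyMeasurable[ℱ N] (stoppedValue f τ) :=
    stronglyMeasurable_stoppedValue_of_le
      hsup.stronglyAdapted.progMeasurable_of_discrete hτ hτle
  have hBmeas : MeasurableSet B :=
    (measurableSet_le stronglyMeasurable_const.measurable
      (hsm.measurable.mono (ℱ.le N) le_rfl))
  have hsub : {ω | ∃ n ≤ N, Y n ω ∈ Xu} ⊆ B := by
    intro ω hω
    obtain ⟨n, hn, hmem⟩ := hω
    have hex : ∃ j ∈ Set.Icc 0 N, f j ω ∈ Set.Ici (1 : ℝ) :=
      ⟨n, ⟨Nat.zero_le n, hn⟩, hv1 n _ hmem⟩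
    exact stoppedValue_hittingBtwn_mem hex
  have hint : Integrable (stoppedValue f τ) μ := by
    have := (hsup.neg.integrable_stoppedValue hτ hτle).neg
    rw [hneg] at this
    simpa using this
  have h1 : (μ {ω | ∃ n ≤ N, Y n ω ∈ Xu}).toReal ≤ (μ B).toReal := by
    exact ENNReal.toReal_mono (measure_ne_top _ _) (measure_mono hsub)
  have h2 : (μ B).toReal ≤ ∫ ω in B, stoppedValue f τ ω ∂μ := by
    have := setIntegral_ge_of_const_le_real hBmeas (measure_ne_top _ _)
      (fun x hx => hx) hint.integrableOn
    simpa [Measure.real] using this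
  have h3 : ∫ ω in B, stoppedValue f τ ω ∂μ ≤ ∫ ω, stoppedValue f τ ω ∂μ := by
    refine setIntegral_le_integral hint ?_
    filter_upwards with ω
    exact hv0 _ _
  have h4 : ∫ ω, stoppedValue f τ ω ∂μ ≤ ∫ ω, f 0 ω ∂μ := by
    have := hsup.neg.expected_stoppedValue_mono
      (isStoppingTime_const ℱ 0) hτ (fun ω => WithTop.coe_le_coe.mpr (Nat.zero_le _)) hτle
    simp only [hneg, Pi.neg_apply] at this
    rw [integral_neg, integral_neg, neg_le_neg_iff] at this
    simpa [stoppedValue] using this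
  calc (μ {ω | ∃ n ≤ N, Y n ω ∈ Xu}).toReal ≤ (μ B).toReal := h1
    _ ≤ ∫ ω in B, stoppedValue f τ ω ∂μ := h2
    _ ≤ ∫ ω, stoppedValue f τ ω ∂μ := h3
    _ ≤ ∫ ω, v 0 (Y 0 ω) ∂μ := h4
end

section
/- Let (Ω, 𝒜, μ) be a probability space, (Λ, ℬ) a measurable space, ξ a probability measure on Λ, and (λ_n)_{n∈ℕ} a sequence of Λ-valued random variables on Ω that is independent with common distribution ξ (i.e., the family (λ_n) is mutually independent and the pushforward of μ under each λ_n equals ξ). Let d ≥ 1, let f : ℕ → ℝ^d → Λ → ℝ^d be measurable, let x₀ ∈ ℝ^d, and define X : ℕ → Ω → ℝ^d recursively by X_0(ω) = x₀ and X_{n+1}(ω) = f(n, X_n(ω), λ_n(ω)). Let ℱ_n be the σ-algebra generated by λ_0, …, λ_{n−1}. Let v : ℕ → ℝ^d → ℝ be a bounded measurable function such that for every n ∈ ℕ and every x ∈ ℝ^d: ∫_Λ v(n+1, f(n, x, a)) dξ(a) ≤ v(n, x). Then the process n ↦ (ω ↦ v(n, X_n(ω))) is a supermartingale with respect to the filtration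 (ℱ_n) and μ. -/
open MeasureTheory
open scoped ENNReal

/-- Conditional expectation of `g(Y, Z)` where `Y` is `m'`-measurable and `Z` is
independent of `m'` with law `ξ`: it equals `ω ↦ ∫ z, g (Y ω, z) ∂ξ`. -/
theorem condexp_indepFun_integral_aux
    {Ω F Λ : Type*} {m' : MeasurableSpace Ω} [m : MeasurableSpace Ω]
    {μ : Measure Ω} [IsProbabilityMeasure μ]
    [mF : MeasurableSpace F] [mΛ : MeasurableSpace Λ]
    (ξ : Measure Λ) [IsProbabilityMeasure ξ]
    (hm' : m' ≤ m)
    {Y : Ω → F} (hY : Measurable[m'] Y)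
    {Z : Ω → Λ} (hZ : Measurable Z) (hZd : μ.map Z = ξ)
    (hindep : ProbabilityTheory.Indep (MeasurableSpace.comap Z mΛ) m' μ)
    {g : F × Λ → ℝ} (hg : Measurable g) {C : ℝ} (hC : 0 ≤ C) (hgC : ∀ p, |g p| ≤ C) :
    μ[fun ω => g (Y ω, Z ω) | m'] =ᵐ[μ] fun ω => ∫ z, g (Y ω, z) ∂ξ := by
  classical
  haveI : SigmaFinite (μ.trim hm') := by
    have : IsFiniteMeasure (μ.trim hm') := isFiniteMeasure_trim hm'
    infer_instance
  have hYm : Measurable Y := hY.mono hm' le_rfl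
  have hW : Measurable fun ω => g (Y ω, Z ω) := hg.comp (hYm.prodMk hZ)
  have hWint : Integrable (fun ω => g (Y ω, Z ω)) μ := by
    refine (integrable_const C).mono' hW.aestronglyMeasurable ?_
    exact Filter.Eventually.of_forall fun ω => by
      simpa [Real.norm_eq_abs] using hgC (Y ω, Z ω)
  -- the candidate
  have hIg : StronglyMeasurable fun y : F => ∫ z, g (y, z) ∂ξ :=
    hg.stronglyMeasurable.integral_prod_right'
  have hIgC : ∀ y : F, |∫ z, g (y, z) ∂ξ| ≤ C := by
    intro y
    calc |∫ z, g (y, z) ∂ξ| ≤ ∫ z, |g (y, z)| ∂ξ := by simpa [Real.norm_eq_abs] using norm_integral_le_integral_norm fun z => g (y, z)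
    _ ≤ ∫ _z, C ∂ξ := by
        refine integral_mono_of_nonneg (Filter.Eventually.of_forall fun z => abs_nonneg _)
          (integrable_const C) (Filter.Eventually.of_forall fun z => hgC _)
    _ = C := by simp
  have hcand_meas : StronglyMeasurable[m'] fun ω => ∫ z, g (Y ω, z) ∂ξ :=
    hIg.comp_measurable hY
  refine (ae_eq_condExp_of_forall_setIntegral_eq hm' hWint ?_ ?_
    (hcand_meas.aestronglyMeasurable)).symm
  · intro s _ _
    refine (integrable_const C).integrableOn.mono' ((hcand_meas.mono hm').aestronglyMeasurable) ?_
    exact Filter.Eventually.of_forall fun ω => by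
      simpa [Real.norm_eq_abs] using hIgC (Y ω)
  · intro s hs _
    -- key Fubini / independence computation
    set Y' : Ω → F × Bool := fun ω => (Y ω, if ω ∈ s then true else false) with hY'def
    have hY' : Measurable[m'] Y' :=
      hY.prodMk (Measurable.ite hs measurable_const measurable_const)
    have hY'm : Measurable Y' := hY'.mono hm' le_rfl
    set g' : (F × Bool) × Λ → ℝ := fun p => if p.1.2 = true then g (p.1.1, p.2) else 0
      with hg'def
    have hg' : Measurable g' := by
      refine Measurable.ite ?_ (hg.comp ((measurable_fst.fst).prodMk measurable_snd))
        measurable_const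
      exact (measurable_fst.snd) (measurableSet_singleton true)
    have hg'C : ∀ p, |g' p| ≤ C := by
      intro p
      by_cases h : p.1.2 = true <;> simp [hg'def, h, hC, hgC]
    have hIndepFun : ProbabilityTheory.IndepFun Y' Z μ :=
      ProbabilityTheory.indep_of_indep_of_le_left hindep.symm hY'.comap_le
    have hmap : μ.map (fun ω => (Y' ω, Z ω)) = (μ.map Y').prod ξ := by
      rw [← hZd]
      exact (ProbabilityTheory.indepFun_iff_map_prod_eq_prod_map_map hY'm.aemeasurable
        hZ.aemeasurable).mp hIndepFun
    haveI : IsProbabilityMeasure (μ.map Y') := Measure.isProbabilityMeasure_map hY'm.aemeasurable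
    have hg'int : Integrable g' ((μ.map Y').prod ξ) := by
      refine (integrable_const C).mono' hg'.aestronglyMeasurable ?_
      exact Filter.Eventually.of_forall fun p => by
        simpa [Real.norm_eq_abs] using hg'C p
    have hIg' : StronglyMeasurable fun y : F × Bool => ∫ z, g' (y, z) ∂ξ :=
      hg'.stronglyMeasurable.integral_prod_right'
    calc ∫ ω in s, ∫ z, g (Y ω, z) ∂ξ ∂μ
        = ∫ ω, (fun y => ∫ z, g' (y, z) ∂ξ) (Y' ω) ∂μ := by
          rw [← integral_indicator (hm' s hs)]
          refine integral_congr_ae (Filter.Eventually.of_forall fun ω => ?_)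
          by_cases h : ω ∈ s <;> simp [hY'def, hg'def, h, Set.indicator]
      _ = ∫ y, ∫ z, g' (y, z) ∂ξ ∂(μ.map Y') := by
          rw [integral_map hY'm.aemeasurable hIg'.aestronglyMeasurable]
      _ = ∫ p, g' p ∂((μ.map Y').prod ξ) := (integral_prod _ hg'int).symm
      _ = ∫ p, g' p ∂(μ.map (fun ω => (Y' ω, Z ω))) := by rw [hmap]
      _ = ∫ ω, g' (Y' ω, Z ω) ∂μ := by
          rw [integral_map (hY'm.prodMk hZ).aemeasurable hg'.aestronglyMeasurable]
      _ = ∫ ω in s, g (Y ω, Z ω) ∂μ := by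
          rw [← integral_indicator (hm' s hs)]
          refine integral_congr_ae (Filter.Eventually.of_forall fun ω => ?_)
          by_cases h : ω ∈ s <;> simp [hY'def, hg'def, h, Set.indicator]

/-- If the discrete-time generator of the stochastic recursion `X_{n+1} = f(n, X_n, λ_n)`
applied to a bounded measurable `v` is nonpositive, i.e.
`∫_Λ v(n+1, f(n,x,a)) dξ(a) ≤ v(n,x)` for all `n, x`, then `n ↦ v(n, X_n)` is a
supermartingale with respect to the filtration `ℱ_n = σ(λ_0, …, λ_{n−1})`. -/
theorem nonpositive_generator_supermartingale
    {Ω : Type*} [m : MeasurableSpace Ω] {μ : Measure Ω} [IsProbabilityMeasure μ]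
    {Λ : Type*} [mΛ : MeasurableSpace Λ] (ξ : Measure Λ) [IsProbabilityMeasure ξ]
    (lam : ℕ → Ω → Λ) (hmeas : ∀ n, Measurable (lam n))
    (hindep : ProbabilityTheory.iIndepFun lam μ)
    (hdist : ∀ n, μ.map (lam n) = ξ)
    {d : ℕ} (hd : 1 ≤ d)
    (f : ℕ → EuclideanSpace ℝ (Fin d) → Λ → EuclideanSpace ℝ (Fin d))
    (hf : Measurable fun p : ℕ × EuclideanSpace ℝ (Fin d) × Λ => f p.1 p.2.1 p.2.2)
    (x₀ : EuclideanSpace ℝ (Fin d))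
    (X : ℕ → Ω → EuclideanSpace ℝ (Fin d))
    (hX0 : ∀ ω, X 0 ω = x₀)
    (hXrec : ∀ n ω, X (n + 1) ω = f n (X n ω) (lam n ω))
    (ℱ : Filtration ℕ m)
    (hℱ : ∀ n, ℱ n = ⨆ i ∈ Finset.range n, MeasurableSpace.comap (lam i) mΛ)
    (v : ℕ → EuclideanSpace ℝ (Fin d) → ℝ)
    (hvmeas : Measurable fun p : ℕ × EuclideanSpace ℝ (Fin d) => v p.1 p.2)
    (hvbdd : ∃ C, ∀ n x, |v n x| ≤ C)
    (hgen : ∀ n x, ∫ a, v (n + 1) (f n x a) ∂ξ ≤ v n x) :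
    Supermartingale (fun n ω => v n (X n ω)) ℱ μ := by
  obtain ⟨C, hC⟩ := hvbdd
  have hC0 : 0 ≤ C := le_trans (abs_nonneg _) (hC 0 x₀)
  -- sections of v and f are measurable
  have hv : ∀ n, Measurable (v n) := fun n => hvmeas.comp (measurable_const.prodMk measurable_id)
  have hfn : ∀ n, Measurable (fun q : EuclideanSpace ℝ (Fin d) × Λ => f n q.1 q.2) :=
    fun n => hf.comp (measurable_const.prodMk measurable_id)
  -- the comap of lam i is below ℱ n for i < n
  have hcomap_le : ∀ i n, i < n → MeasurableSpace.comap (lam i) mΛ ≤ ℱ n := by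
    intro i n hin
    rw [hℱ n]
    exact le_iSup₂ (f := fun i (_ : i ∈ Finset.range n) => MeasurableSpace.comap (lam i) mΛ) i
      (Finset.mem_range.mpr hin)
  -- X n is ℱ n measurable
  have hXm : ∀ n, Measurable[ℱ n] (X n) := by
    intro n
    induction n with
    | zero =>
      have : X 0 = fun _ => x₀ := funext hX0
      rw [this]; exact measurable_const
    | succ n ih =>
      have hXeq : X (n + 1) = fun ω => f n (X n ω) (lam n ω) := funext (hXrec n)
      rw [hXeq]
      have hXn : Measurable[ℱ (n + 1)] (X n) := ih.mono (ℱ.mono n.le_succ) le_rfl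
      have hlamn : Measurable[ℱ (n + 1)] (lam n) := by
        have h0 : Measurable[MeasurableSpace.comap (lam n) mΛ] (lam n) :=
          measurable_iff_comap_le.mpr le_rfl
        exact h0.mono (hcomap_le n (n + 1) n.lt_succ_self) le_rfl
      exact (hfn n).comp (hXn.prodMk hlamn)
  have hadp : StronglyAdapted ℱ fun n ω => v n (X n ω) :=
    fun n => ((hv n).comp (hXm n)).stronglyMeasurable
  have hXmm : ∀ n, Measurable (X n) := fun n => (hXm n).mono (ℱ.le n) le_rfl
  have hint : ∀ n, Integrable (fun ω => v n (X n ω)) μ := by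
    intro n
    refine (integrable_const C).mono' ((hv n).comp (hXmm n)).aestronglyMeasurable ?_
    exact Filter.Eventually.of_forall fun ω => by simpa [Real.norm_eq_abs] using hC n (X n ω)
  refine supermartingale_nat hadp hint fun n => ?_
  -- independence of lam n from ℱ n
  have hIndep : ProbabilityTheory.Indep (MeasurableSpace.comap (lam n) mΛ) (ℱ n) μ := by
    have h := ProbabilityTheory.indep_iSup_of_disjoint
      (fun k => (hmeas k).comap_le) hindep (S := {n}) (T := {k | k < n})
      (by simp [Set.disjoint_left])
    rw [iSup_singleton] at h
    have heq : (⨆ i ∈ {k | k < n}, MeasurableSpace.comap (lam i) mΛ) = ℱ n := by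
      rw [hℱ n]
      exact iSup_congr fun i => by simp [Finset.mem_range, Set.mem_setOf_eq]
    rwa [heq] at h
  have key := condexp_indepFun_integral_aux ξ (ℱ.le n) (hXm n) (hmeas n) (hdist n) hIndep
    ((hv (n + 1)).comp (hfn n)) hC0 (fun p => hC (n + 1) (f n p.1 p.2))
  have heq : (fun ω => v (n + 1) (X (n + 1) ω)) =
      fun ω => v (n + 1) (f n (X n ω) (lam n ω)) := funext fun ω => by rw [hXrec]
  rw [heq]
  refine key.le.trans (Filter.Eventually.of_forall fun ω => ?_)
  exact hgen n (X n ω)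
end
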